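/- Let d ≥ 1, let S be a finite set of vectors in ℤ^d (functions Fin d → ℤ), let φ : Fin d → ℝ, and let ε > 0. Then there exists ψ : Fin d → ℚ with |ψ i − φ i| < ε for every i, such that for all h, h′ ∈ S: if Σ_i φ i · (h i) < Σ_i φ i · (h′ i) then Σ_i ψ i · (h i) < Σ_i ψ i · (h′ i), and if Σ_i φ i · (h i) = Σ_i φ i · (h′ i) then Σ_i ψ i · (h i) = Σ_i ψ i · (h′ i). -/

import Mathlib

/-- Rational approximation of a real linear functional preserving the induced
(strict and equality) ordering on a fixed finite set of lattice points. -/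
theorem exists_rat_approx_same_order (d : ℕ) (hd : 1 ≤ d)
    (S : Finset (Fin d → ℤ)) (φ : Fin d → ℝ) (ε : ℝ) (hε : 0 < ε) :
    ∃ ψ : Fin d → ℚ, (∀ i : Fin d, |(ψ i : ℝ) - φ i| < ε) ∧
      ∀ h ∈ S, ∀ h' ∈ S,
        ((∑ i : Fin d, φ i * (h i : ℝ)) < (∑ i : Fin d, φ i * (h' i : ℝ)) →
          (∑ i : Fin d, (ψ i : ℝ) * (h i : ℝ)) < (∑ i : Fin d, (ψ i : ℝ) * (h' i : ℝ))) ∧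
        ((∑ i : Fin d, φ i * (h i : ℝ)) = (∑ i : Fin d, φ i * (h' i : ℝ)) →
          (∑ i : Fin d, (ψ i : ℝ) * (h i : ℝ)) = (∑ i : Fin d, (ψ i : ℝ) * (h' i : ℝ))) := by
  classical
  -- W : ℚ-span of the coordinates of φ inside ℝ
  set W : Submodule ℚ ℝ := Submodule.span ℚ (Set.range φ) with hWdef
  haveI : FiniteDimensional ℚ W := FiniteDimensional.span_of_finite ℚ (Set.finite_range φ)
  set n := Module.finrank ℚ W with hn
  let b : Module.Basis (Fin n) ℚ W := Module.finBasis ℚ W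
  have hmem : ∀ i, φ i ∈ W := fun i => Submodule.subset_span ⟨i, rfl⟩
  let Φ : Fin d → W := fun i => ⟨φ i, hmem i⟩
  let c : Fin d → Fin n → ℚ := fun i j => b.repr (Φ i) j
  -- representation of φ i in terms of the basis
  have hrep : ∀ i, φ i = ∑ j, (c i j : ℝ) * (b j : ℝ) := by
    intro i
    have h1 : (Φ i : ℝ) = ((∑ j, b.repr (Φ i) j • b j : W) : ℝ) := by
      rw [b.sum_repr (Φ i)]
    have h2 : ((∑ j, b.repr (Φ i) j • b j : W) : ℝ)
        = ∑ j, (c i j : ℝ) * (b j : ℝ) := by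
      push_cast
      refine Finset.sum_congr rfl fun j _ => ?_
      rw [Rat.smul_def]
    simpa [Φ] using h1.trans h2
  -- rational coefficients of the linear functional evaluated on lattice points
  let r : (Fin d → ℤ) → Fin n → ℚ := fun h j => ∑ i, (h i : ℚ) * c i j
  have key : ∀ (x : Fin n → ℝ) (h : Fin d → ℤ),
      ∑ i, (∑ j, (c i j : ℝ) * x j) * (h i : ℝ) = ∑ j, (r h j : ℝ) * x j := by
    intro x h
    simp only [Finset.sum_mul]
    rw [Finset.sum_comm]
    refine Finset.sum_congr rfl fun j _ => ?_
    have : (r h j : ℝ) = ∑ i, (h i : ℝ) * (c i j : ℝ) := by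
      simp [r]
    rw [this, Finset.sum_mul]
    refine Finset.sum_congr rfl fun i _ => by ring
  have hr : ∀ h : Fin d → ℤ,
      (∑ i, φ i * (h i : ℝ)) = ∑ j, (r h j : ℝ) * (b j : ℝ) := by
    intro h
    rw [← key (fun j => (b j : ℝ)) h]
    exact Finset.sum_congr rfl fun i _ => by rw [hrep i]
  -- linear independence of the basis over ℚ inside ℝ
  have li : LinearIndependent ℚ (fun j : Fin n => (b j : ℝ)) :=
    b.linearIndependent.map' W.subtype W.ker_subtype
  have hrlin : ∀ h h' : Fin d → ℤ,
      (∑ i, φ i * (h i : ℝ)) = (∑ i, φ i * (h' i : ℝ)) → r h = r h' := by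
    intro h h' heq
    rw [hr h, hr h'] at heq
    have hz : ∑ j, (r h j - r h' j) • (b j : ℝ) = 0 := by
      simp only [sub_smul, Finset.sum_sub_distrib]
      rw [sub_eq_zero]
      simpa [Rat.smul_def] using heq
    have hz' := Fintype.linearIndependent_iff.mp li (fun j => r h j - r h' j) hz
    funext j
    have hj : r h j - r h' j = 0 := by simpa using hz' j
    linarith
  -- the value of a candidate x on a lattice point h
  let T : (Fin d → ℤ) → (Fin n → ℝ) → ℝ := fun h x => ∑ j, (r h j : ℝ) * x j
  have hTcont : ∀ h, Continuous (T h) := by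
    intro h
    exact continuous_finset_sum _ fun j _ => (continuous_const.mul (continuous_apply j))
  have hgcont : ∀ i : Fin d, Continuous (fun x : Fin n → ℝ => ∑ j, (c i j : ℝ) * x j) := by
    intro i
    exact continuous_finset_sum _ fun j _ => (continuous_const.mul (continuous_apply j))
  -- the open set of good candidates
  let U : Set (Fin n → ℝ) :=
    {x | (∀ i, |(∑ j, (c i j : ℝ) * x j) - φ i| < ε) ∧
      ∀ h ∈ S, ∀ h' ∈ S,
        (∑ i, φ i * (h i : ℝ)) < (∑ i, φ i * (h' i : ℝ)) → T h x < T h' x}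
  have hU : IsOpen U := by
    have hUeq : U = (⋂ i, {x | |(∑ j, (c i j : ℝ) * x j) - φ i| < ε}) ∩
        (⋂ h ∈ S, ⋂ h' ∈ S,
          {x | (∑ i, φ i * (h i : ℝ)) < (∑ i, φ i * (h' i : ℝ)) → T h x < T h' x}) := by
      ext x
      simp [U, Set.mem_iInter]
    rw [hUeq]
    apply IsOpen.inter
    · exact isOpen_iInter_of_finite fun i =>
        isOpen_lt (continuous_abs.comp ((hgcont i).sub continuous_const)) continuous_const
    · refine isOpen_biInter_finset fun h _ => isOpen_biInter_finset fun h' _ => ?_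
      by_cases hc : (∑ i, φ i * (h i : ℝ)) < (∑ i, φ i * (h' i : ℝ))
      · have : {x : Fin n → ℝ |
            (∑ i, φ i * (h i : ℝ)) < (∑ i, φ i * (h' i : ℝ)) → T h x < T h' x}
            = {x | T h x < T h' x} := by
          ext x; simp [hc]
        rw [this]
        exact isOpen_lt (hTcont h) (hTcont h')
      · have : {x : Fin n → ℝ |
            (∑ i, φ i * (h i : ℝ)) < (∑ i, φ i * (h' i : ℝ)) → T h x < T h' x}
            = Set.univ := by
          ext x; simp [hc]
        rw [this]
        exact isOpen_univ
  have hbU : (fun j => (b j : ℝ)) ∈ U := by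
    constructor
    · intro i
      rw [← hrep i]
      simpa using hε
    · intro h _ h' _ hlt
      have e1 : T h (fun j => (b j : ℝ)) = ∑ i, φ i * (h i : ℝ) := (hr h).symm
      have e2 : T h' (fun j => (b j : ℝ)) = ∑ i, φ i * (h' i : ℝ) := (hr h').symm
      rw [e1, e2]; exact hlt
  -- rational points are dense in ℝ^n
  have hdense : Dense (Set.pi Set.univ fun _ : Fin n => Set.range ((↑) : ℚ → ℝ)) :=
    dense_pi Set.univ fun _ _ => Rat.denseRange_cast
  obtain ⟨x, hxQ, hxU⟩ := hdense.exists_mem_open hU ⟨_, hbU⟩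
  choose q hq using fun j => hxQ j (Set.mem_univ j)
  have hqx : (fun j => (q j : ℝ)) = x := funext hq
  -- define ψ
  refine ⟨fun i => ∑ j, c i j * q j, ?_, ?_⟩
  · intro i
    have : ((∑ j, c i j * q j : ℚ) : ℝ) = ∑ j, (c i j : ℝ) * x j := by
      push_cast
      exact Finset.sum_congr rfl fun j _ => by rw [hq j]
    rw [this]
    exact hxU.1 i
  · intro h hS h' hS'
    have hψ : ∀ g : Fin d → ℤ,
        (∑ i, ((∑ j, c i j * q j : ℚ) : ℝ) * (g i : ℝ)) = T g x := by
      intro g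
      have e : ∀ i, ((∑ j, c i j * q j : ℚ) : ℝ) = ∑ j, (c i j : ℝ) * x j := by
        intro i
        push_cast
        exact Finset.sum_congr rfl fun j _ => by rw [hq j]
      calc (∑ i, ((∑ j, c i j * q j : ℚ) : ℝ) * (g i : ℝ))
          = ∑ i, (∑ j, (c i j : ℝ) * x j) * (g i : ℝ) :=
            Finset.sum_congr rfl fun i _ => by rw [e i]
        _ = ∑ j, (r g j : ℝ) * x j := key x g
    constructor
    · intro hlt
      rw [hψ h, hψ h']
      exact hxU.2 h hS h' hS' hlt
    · intro heq
      rw [hψ h, hψ h']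
      have : r h = r h' := hrlin h h' heq
      simp [T, this]
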